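/- Let M be a matroid of rank r and adM an adjoint of M with ground set H(M) (so that each non-loop e of M yields the hyperplane H[e] = {H ∈ H(M) : e ∈ H} of adM). If B is a basis of M, then the set of fundamental hyperplanes {H(e;B) : e ∈ B} is a basis of adM. -/

import Mathlib

open Set Matroid
open scoped Matroid

namespace AdjointPaper

variable {α β γ : Type*}

/-- The rank of a set `X` in a matroid `M`: the supremum of cardinalities of
independent subsets of `X`. -/
noncomputable def mrank (M : Matroid α) (X : Set α) : ℕ :=
  sSup (Set.ncard '' {I | M.Indep I ∧ I ⊆ X})

/-- The rank of a matroid. -/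
noncomputable def mrk (M : Matroid α) : ℕ := mrank M M.E

/-- A hyperplane of `M`: a coatom of the lattice of flats. -/
def IsHyperplane (M : Matroid α) (H : Set α) : Prop :=
  M.IsFlat H ∧ H ≠ M.E ∧ ∀ F, M.IsFlat F → H ⊂ F → F = M.E

/-- An atom of the lattice of flats of `M`. -/
def IsFlatAtom (M : Matroid α) (P : Set α) : Prop :=
  M.IsFlat P ∧ M.closure ∅ ⊂ P ∧ ∀ F, M.IsFlat F → M.closure ∅ ⊂ F → F ⊆ P → F = P

/-- `e` is a loop of `M`. -/
def IsLoop (M : Matroid α) (e : α) : Prop := e ∈ M.E ∧ ¬ M.Indep {e}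

/-- `M` is loopless. -/
def Loopless (M : Matroid α) : Prop := ∀ e ∈ M.E, M.Indep {e}

/-- `M` is simple: loopless and with no two parallel elements. -/
def Simple (M : Matroid α) : Prop :=
  (∀ e ∈ M.E, M.Indep {e}) ∧
    ∀ e ∈ M.E, ∀ f ∈ M.E, M.closure {e} = M.closure {f} → e = f

/-- `φ` is an adjoint map from `M` to `N`: an injective, order-reversing map on
flats taking hyperplanes of `M` bijectively onto the atoms of `N`, with
`N` of the same rank as `M`. -/
structure IsAdjointMap (M : Matroid α) (N : Matroid β) (φ : Set α → Set β) : Prop where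
  rank_eq : mrk N = mrk M
  flat : ∀ ⦃F⦄, M.IsFlat F → N.IsFlat (φ F)
  inj : ∀ ⦃F F'⦄, M.IsFlat F → M.IsFlat F' → φ F = φ F' → F = F'
  antitone : ∀ ⦃F F'⦄, M.IsFlat F → M.IsFlat F' → F ⊆ F' → φ F' ⊆ φ F
  hyper_atom : ∀ ⦃H⦄, IsHyperplane M H → IsFlatAtom N (φ H)
  atom_surj : ∀ ⦃P⦄, IsFlatAtom N P → ∃ H, IsHyperplane M H ∧ φ H = P

/-- `N` is an adjoint of `M`. -/
def IsAdjoint (M : Matroid α) (N : Matroid β) : Prop := ∃ φ, IsAdjointMap M N φ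

/-- Isomorphism of matroids. -/
def Iso (M : Matroid α) (N : Matroid β) : Prop :=
  ∃ f : α → β, Set.BijOn f M.E N.E ∧ ∀ I ⊆ M.E, (M.Indep I ↔ N.Indep (f '' I))

/-- Connectedness: `M` has nonempty ground set and is not a direct sum of two
matroids on nonempty ground sets. -/
def Conn (M : Matroid α) : Prop :=
  M.E.Nonempty ∧ ∀ (N₁ N₂ : Matroid α) (h : Disjoint N₁.E N₂.E),
    N₁.E.Nonempty → N₂.E.Nonempty → M ≠ Matroid.disjointSum N₁ N₂ h

/-- A circuit of `M`: a minimal dependent set. -/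
def IsCircuit (M : Matroid α) (C : Set α) : Prop :=
  C ⊆ M.E ∧ ¬ M.Indep C ∧ ∀ D, D ⊂ C → M.Indep D

/-- `K` is a connected component of `M`. -/
def ConnComponent (M : Matroid α) (K : Set α) : Prop :=
  K ⊆ M.E ∧ K.Nonempty ∧ Conn (M ↾ K) ∧
    ∀ C, IsCircuit M C → C ⊆ K ∨ Disjoint C K

/-- `M` is a modular matroid: every pair of flats is a modular pair. -/
def Modular (M : Matroid α) : Prop :=
  ∀ F F', M.IsFlat F → M.IsFlat F' →
    mrank M (M.closure (F ∪ F')) + mrank M (F ∩ F') = mrank M F + mrank M F'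

/-- The lattice of flats of `N` is isomorphic to the opposite of the lattice of
flats of `M`. -/
def FlatOpIso (M : Matroid α) (N : Matroid β) : Prop :=
  ∃ ψ : Set α → Set β, (∀ F, M.IsFlat F → N.IsFlat (ψ F)) ∧
    (∀ F F', M.IsFlat F → M.IsFlat F' → (F ⊆ F' ↔ ψ F' ⊆ ψ F)) ∧
    ∀ G, N.IsFlat G → ∃ F, M.IsFlat F ∧ ψ F = G

/-- A linear subclass of `M`: a set of hyperplanes closed under the hyperplanes
through a comodular intersection of two of its members. The lattice of all
linear subclasses ordered by inclusion is the extension lattice `E(M)`. -/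
def LinearSubclass (M : Matroid α) (S : Set (Set α)) : Prop :=
  (∀ H ∈ S, IsHyperplane M H) ∧
    ∀ H₁ ∈ S, ∀ H₂ ∈ S, mrank M (H₁ ∩ H₂) = mrk M - 2 →
      ∀ H₃, IsHyperplane M H₃ → H₁ ∩ H₂ ⊆ H₃ → H₃ ∈ S

/-- `N` is (isomorphic to) the projective geometry `PG (r-1, F)`, via a
representation `f` hitting every point of the projective space exactly once. -/
def IsProjGeomRep (N : Matroid β) (r : ℕ) (F : Type*) [Field F] : Prop :=
  ∃ f : β → (Fin r → F),
    (∀ e ∈ N.E, f e ≠ 0) ∧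
    (∀ e ∈ N.E, ∀ e' ∈ N.E,
      Submodule.span F {f e} = Submodule.span F {f e'} → e = e') ∧
    (∀ v : Fin r → F, v ≠ 0 → ∃ e ∈ N.E, Submodule.span F {f e} = Submodule.span F {v}) ∧
    ∀ I, I ⊆ N.E → (N.Indep I ↔ LinearIndependent F (fun x : I => f x.1))

/-- `N` is (isomorphic to) the finite projective geometry `PG (r-1, q)`. -/
def IsProjGeom (N : Matroid β) (r q : ℕ) : Prop :=
  ∃ (F : Type) (instF : Field F) (instT : Fintype F),
    @Fintype.card F instT = q ∧ @IsProjGeomRep _ N r F instF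

/-- `M` is a projective plane: a simple rank-3 matroid in which every line has
at least three points and every two lines meet. -/
def IsProjPlane (M : Matroid α) : Prop :=
  Simple M ∧ mrk M = 3 ∧
    (∀ L, M.IsFlat L → mrank M L = 2 → 3 ≤ L.ncard) ∧
    ∀ L L', M.IsFlat L → M.IsFlat L' → mrank M L = 2 → mrank M L' = 2 → (L ∩ L').Nonempty

/-- `N` is (isomorphic to) the uniform matroid `U_{r,m}`. -/
def IsUnif (N : Matroid β) (r m : ℕ) : Prop :=
  N.E.Finite ∧ N.E.ncard = m ∧ ∀ I, I ⊆ N.E → (N.Indep I ↔ I.Finite ∧ I.ncard ≤ r)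

/-- The closure of any set is a flat. -/
lemma aux_closure_flat (M : Matroid α) (X : Set α) : M.IsFlat (M.closure X) := by
  have hne : Nonempty {F // M.IsFlat F ∧ X ∩ M.E ⊆ F} :=
    ⟨⟨M.E, M.ground_isFlat, inter_subset_right⟩⟩
  have h := Matroid.IsFlat.iInter (M := M)
    (Fs := fun F : {F // M.IsFlat F ∧ X ∩ M.E ⊆ F} => F.1) (fun F => F.2.1)
  rw [Matroid.closure_def, sInter_eq_iInter]
  exact h

/-- In a finite matroid, the rank equals the cardinality of any base. -/
lemma aux_mrk_eq_ncard_base {M : Matroid α} [M.Finite] {B : Set α} (hB : M.IsBase B) :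
    mrk M = B.ncard := by
  have hmem : B.ncard ∈ Set.ncard '' {I | M.Indep I ∧ I ⊆ M.E} :=
    ⟨B, ⟨hB.indep, hB.subset_ground⟩, rfl⟩
  have hub : ∀ n ∈ Set.ncard '' {I | M.Indep I ∧ I ⊆ M.E}, n ≤ B.ncard := by
    rintro n ⟨I, ⟨hI, -⟩, rfl⟩
    obtain ⟨B', hB', hIB'⟩ := hI.exists_isBase_superset
    have hB'fin : B'.Finite := M.set_finite B' hB'.subset_ground
    calc I.ncard ≤ B'.ncard := Set.ncard_le_ncard hIB' hB'fin
      _ = B.ncard := hB'.ncard_eq_ncard_of_isBase hB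
  exact le_antisymm (csSup_le ⟨_, hmem⟩ hub) (le_csSup ⟨B.ncard, hub⟩ hmem)

/-- In a finite matroid, an independent set whose cardinality equals the rank
is a base. -/
lemma aux_base_of_indep_ncard {M : Matroid α} [M.Finite] {I : Set α}
    (hI : M.Indep I) (hcard : I.ncard = mrk M) : M.IsBase I := by
  obtain ⟨B, hB, hIB⟩ := hI.exists_isBase_superset
  have hBfin : B.Finite := M.set_finite B hB.subset_ground
  have : I = B := Set.eq_of_subset_of_ncard_le hIB
    (by rw [hcard, aux_mrk_eq_ncard_base hB]) hBfin
  rwa [this]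

/-- The fundamental hyperplane of a basis element. -/
lemma aux_fund_hyperplane {M : Matroid α} {B : Set α} (hB : M.IsBase B) {e : α}
    (he : e ∈ B) : IsHyperplane M (M.closure (B \ {e})) := by
  have hBE : B ⊆ M.E := hB.subset_ground
  have hBe : B \ {e} ⊆ M.E := diff_subset.trans hBE
  have hecl : e ∉ M.closure (B \ {e}) := hB.indep.notMem_closure_sdiff_of_mem he
  refine ⟨aux_closure_flat M _, ?_, ?_⟩
  · intro h
    exact hecl (h ▸ hBE he)
  · intro F hF hssub
    obtain ⟨x, hxF, hxcl⟩ := exists_of_ssubset hssub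
    have hxE : x ∈ M.E := hF.subset_ground hxF
    have hBeF : B \ {e} ⊆ F := (M.subset_closure _ hBe).trans hssub.subset
    by_cases hxB : x ∈ B
    · have hxe : x = e := by
        by_contra hne
        exact hxcl (M.subset_closure _ hBe ⟨hxB, hne⟩)
      have hBF : B ⊆ F := by
        intro y hy
        by_cases hye : y = e
        · exact hye ▸ hxe ▸ hxF
        · exact hBeF ⟨hy, hye⟩
      have : M.E ⊆ F := by
        rw [← hB.closure_eq, ← hF.closure]
        exact M.closure_subset_closure hBF
      exact (this.antisymm hF.subset_ground).symm
    · have hind : M.Indep (insert x (B \ {e})) := by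
        rw [(hB.indep.subset diff_subset).insert_indep_iff_of_notMem
          (fun h => hxB h.1)]
        exact ⟨hxE, hxcl⟩
      have hbase : M.IsBase (insert x (B \ {e})) := hB.exchange_isBase_of_indep hxB hind
      have hsubF : insert x (B \ {e}) ⊆ F := insert_subset hxF hBeF
      have : M.E ⊆ F := by
        rw [← hbase.closure_eq, ← hF.closure]
        exact M.closure_subset_closure hsubF
      exact (this.antisymm hF.subset_ground).symm

/-- the fundamental hyperplanes of a basis of `M` form a basis of
an adjoint realized on the ground set `H(M)`. -/
theorem statement_3 {M : Matroid α} {N : Matroid (Set α)} [M.Finite] [N.Finite]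
    {r : ℕ} (hrM : mrk M = r) (hrN : mrk N = r)
    (hE : N.E = {H | IsHyperplane M H})
    (hHyp : ∀ e ∈ M.E, ¬ IsLoop M e →
      IsHyperplane N {H | IsHyperplane M H ∧ e ∈ H})
    {B : Set α} (hB : M.IsBase B) :
    N.IsBase ((fun e => M.closure (B \ {e})) '' B) := by
  set φ : α → Set α := fun e => M.closure (B \ {e}) with hφ
  have hBE : B ⊆ M.E := hB.subset_ground
  have hBeE : ∀ e, B \ {e} ⊆ M.E := fun e => diff_subset.trans hBE
  have hnotcl : ∀ e ∈ B, e ∉ φ e := fun e he =>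
    hB.indep.notMem_closure_sdiff_of_mem he
  have hmemcl : ∀ e ∈ B, ∀ f ∈ B, e ≠ f → e ∈ φ f := fun e he f hf hef =>
    M.subset_closure _ (hBeE f) ⟨he, hef⟩
  have hinj : Set.InjOn φ B := by
    intro e he f hf hef
    by_contra hne
    exact hnotcl f hf (hef ▸ hmemcl f hf e he (Ne.symm hne))
  have hsubE : φ '' B ⊆ N.E := by
    rintro _ ⟨e, he, rfl⟩
    rw [hE]
    exact aux_fund_hyperplane hB he
  have hindep : N.Indep (φ '' B) := by
    rw [Matroid.indep_iff_forall_notMem_closure_sdiff']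
    refine ⟨hsubE, ?_⟩
    rintro _ ⟨e, he, rfl⟩ hmem
    have heE : e ∈ M.E := hBE he
    have henl : ¬ IsLoop M e := fun hl =>
      hl.2 (hB.indep.subset (singleton_subset_iff.2 he))
    have hA : IsHyperplane N {H | IsHyperplane M H ∧ e ∈ H} := hHyp e heE henl
    have hsub : φ '' B \ {φ e} ⊆ {H | IsHyperplane M H ∧ e ∈ H} := by
      rintro _ ⟨⟨f, hf, rfl⟩, hne⟩
      have hfe : f ≠ e := fun h => hne (by rw [h]; rfl)
      exact ⟨aux_fund_hyperplane hB hf, hmemcl e he f hf (Ne.symm hfe)⟩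
    have : N.closure (φ '' B \ {φ e}) ⊆ {H | IsHyperplane M H ∧ e ∈ H} := by
      calc N.closure (φ '' B \ {φ e})
          ⊆ N.closure {H | IsHyperplane M H ∧ e ∈ H} :=
            N.closure_subset_closure hsub
        _ = {H | IsHyperplane M H ∧ e ∈ H} := hA.1.closure
    exact hnotcl e he (this hmem).2
  have hcard : (φ '' B).ncard = mrk N := by
    rw [Set.ncard_image_of_injOn hinj, ← aux_mrk_eq_ncard_base hB, hrM, hrN]
  exact aux_base_of_indep_ncard hindep hcard

end AdjointPaper
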